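/- Let G be a group, κ : G → G a group automorphism with κ ∘ κ = id_G, and δ : G → G a map with κ ∘ δ = δ ∘ κ satisfying δ(x)δ(y) = δ(y)δ(x δ(y)) for all x, y ∈ G; define x ◁ y = κ(x)δ(y). Assume that the image Im(δ) is a subgroup of G and that the fibers δ⁻¹(d), for d ∈ Im(δ), are pairwise equinumerous. Then for any a₁, …, aₙ ∈ G, the set Ann^{+1}(A_{a₁,…,aₙ}) = { x ∈ G : κ^{n+1}(x) = A_{a₁,…,aₙ}(x) ◁ κ^{n+1}(x) } is nonempty and is in bijection with Ann(G) = { x ∈ G : x ◁ κ(x) = κ(x) }. -/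

import Mathlib

/-- With `x ◁ y = κ(x)δ(y)` as before, if `δ` satisfies
`δ(x)δ(y) = δ(y)δ(xδ(y))`, its image is a subgroup of `G`, and its fibers over the
image are pairwise equinumerous, then for any `a₁, …, aₙ ∈ G` the set
`Ann⁺¹(A_{a₁,…,aₙ}) = { x : κ^{n+1}(x) = A_{a₁,…,aₙ}(x) ◁ κ^{n+1}(x) }` is nonempty
and in bijection with `Ann(G) = { x : x ◁ κ(x) = κ(x) }`. -/
theorem stmt_5 {G : Type*} [Group G] (κ : G →* G) (hκ : ∀ x, κ (κ x) = x)
    (δ : G → G) (hcomm : ∀ x, κ (δ x) = δ (κ x))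
    (hkey : ∀ x y : G, δ x * δ y = δ y * δ (x * δ y))
    (hsub : ∃ H : Subgroup G, (H : Set G) = Set.range δ)
    (hfib : ∀ d e : G, d ∈ Set.range δ → e ∈ Set.range δ →
      Nonempty ((δ ⁻¹' {d}) ≃ (δ ⁻¹' {e})))
    (n : ℕ) (a : Fin n → G) :
    {x : G | (⇑κ)^[n + 1] x
        = κ ((List.ofFn a).foldl (fun u v => κ u * δ v) x)
          * δ ((⇑κ)^[n + 1] x)}.Nonempty ∧
    Nonempty ({x : G | (⇑κ)^[n + 1] x
        = κ ((List.ofFn a).foldl (fun u v => κ u * δ v) x)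
          * δ ((⇑κ)^[n + 1] x)}
      ≃ {x : G | κ x * δ (κ x) = κ x}) := by
  obtain ⟨H, hH⟩ := hsub
  set step : G → G → G := fun u v => κ u * δ v with hstep
  -- iterates of κ are involutive
  have kinv : ∀ (m : ℕ) (x : G), (⇑κ)^[m] ((⇑κ)^[m] x) = x := by
    intro m
    induction m with
    | zero => intro x; simp
    | succ m ih =>
      intro x
      rw [Function.iterate_succ_apply' κ m x, Function.iterate_succ_apply,
        hκ, ih]
  -- κ iterates commute with δ
  have kdelta : ∀ (m : ℕ) (z : G), (⇑κ)^[m] (δ z) = δ ((⇑κ)^[m] z) := by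
    intro m
    induction m with
    | zero => intro z; simp
    | succ m ih =>
      intro z
      rw [Function.iterate_succ_apply, Function.iterate_succ_apply, hcomm, ih]
  -- shift lemma for foldl
  have shift : ∀ (l : List G) (x y : G),
      l.foldl step (x * y) = (⇑κ)^[l.length] x * l.foldl step y := by
    intro l
    induction l with
    | nil => intro x y; simp
    | cons v l ih =>
      intro x y
      have h1 : step (x * y) v = κ x * step y v := by
        simp only [hstep, map_mul, mul_assoc]
      simp only [List.foldl_cons, h1, ih, List.length_cons,
        Function.iterate_succ_apply]
  -- the constant lies in H
  have memH : ∀ (l : List G), l.foldl step 1 ∈ H := by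
    intro l
    induction l with
    | nil => simpa using H.one_mem
    | cons v l ih =>
      have h1 : step 1 v = δ v * 1 := by simp [hstep]
      have h2 : (⇑κ)^[l.length] (δ v) ∈ H := by
        rw [← SetLike.mem_coe, hH, kdelta]
        exact ⟨(⇑κ)^[l.length] v, rfl⟩
      simpa only [List.foldl_cons, h1, shift l (δ v) 1] using H.mul_mem h2 ih
  set C : G := (List.ofFn a).foldl step 1 with hC
  have hfold : ∀ x : G, (List.ofFn a).foldl step x = (⇑κ)^[n] x * C := by
    intro x
    have := shift (List.ofFn a) x 1
    simpa [List.length_ofFn] using this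
  -- (κ C)⁻¹ is in the range of δ
  have hκC : (κ C)⁻¹ ∈ Set.range δ := by
    have hCr : C ∈ Set.range δ := by rw [← hH]; exact memH _
    obtain ⟨u, hu⟩ := hCr
    have h1 : κ C ∈ Set.range δ := ⟨κ u, by rw [← hcomm, hu]⟩
    have h2 : (κ C)⁻¹ ∈ H := H.inv_mem (by rw [← SetLike.mem_coe, hH]; exact h1)
    rw [← hH]; exact h2
  obtain ⟨w, hw⟩ := hκC
  -- rewrite the main set
  have hSeq : {x : G | (⇑κ)^[n + 1] x
        = κ ((List.ofFn a).foldl step x) * δ ((⇑κ)^[n + 1] x)}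
      = {x : G | δ ((⇑κ)^[n + 1] x) = (κ C)⁻¹} := by
    ext x
    simp only [Set.mem_setOf_eq]
    rw [hfold x, map_mul, ← Function.iterate_succ_apply' κ n x, mul_assoc,
      left_eq_mul, mul_eq_one_iff_inv_eq, eq_comm]
  have hTeq : {x : G | κ x * δ (κ x) = κ x} = {x : G | δ (κ x) = 1} := by
    ext x
    simp only [Set.mem_setOf_eq, mul_eq_left]
  constructor
  · rw [hSeq]
    exact ⟨(⇑κ)^[n + 1] w, by simp only [Set.mem_setOf_eq, kinv (n+1) w, hw]⟩
  · rw [hSeq, hTeq]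
    have e1 : {x : G | δ ((⇑κ)^[n + 1] x) = (κ C)⁻¹} ≃ (δ ⁻¹' {(κ C)⁻¹}) :=
      Equiv.subtypeEquiv (Function.Involutive.toPerm _ (kinv (n+1)))
        (fun x => Iff.rfl)
    have e2 : {x : G | δ (κ x) = 1} ≃ (δ ⁻¹' {(1 : G)}) :=
      Equiv.subtypeEquiv (Function.Involutive.toPerm (⇑κ) hκ) (fun x => Iff.rfl)
    have h1r : (κ C)⁻¹ ∈ Set.range δ := ⟨w, hw⟩
    have hone : (1 : G) ∈ Set.range δ := by rw [← hH]; exact H.one_mem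
    obtain ⟨e3⟩ := hfib _ _ h1r hone
    exact ⟨e1.trans (e3.trans e2.symm)⟩
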